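/- Let p be an odd prime, k ≥ 0, and V = (Z/p^{k+1})². Consider 4-tuples (v_1, v_2, v_3, v_4) ∈ V⁴ with v_1 − v_2 + v_3 − v_4 = 0 and such that the differences {v_i − v_j : 1 ≤ i < j ≤ 4} generate V. Then the group GL_2(Z/p^{k+1}) ⋉ V (acting by β: v_i ↦ β(v_i) and translations v_i ↦ v_i + w simultaneously on all four entries) acts transitively on the set of such tuples. -/

import Mathlib

section Aux

variable {R : Type*} [CommRing R]

/-- Matrix with columns `a`, `b`. -/
def colMat (a b : Fin 2 → R) : Matrix (Fin 2) (Fin 2) R :=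
  Matrix.of fun i j => ![a, b] j i

lemma colMat_mulVec (a b : Fin 2 → R) (x : Fin 2 → R) :
    (colMat a b).mulVec x = x 0 • a + x 1 • b := by
  funext i
  simp [colMat, Matrix.mulVec, dotProduct, Fin.sum_univ_two, mul_comm]

lemma colMat_mulVec_e0 (a b : Fin 2 → R) :
    (colMat a b).mulVec ![1, 0] = a := by
  rw [colMat_mulVec]; simp

lemma colMat_mulVec_e1 (a b : Fin 2 → R) :
    (colMat a b).mulVec ![0, 1] = b := by
  rw [colMat_mulVec]; simp

lemma exists_rightInv {a b : Fin 2 → R} (h : Submodule.span R {a, b} = ⊤) :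
    ∃ N : Matrix (Fin 2) (Fin 2) R, colMat a b * N = 1 := by
  have h0 : (![1, 0] : Fin 2 → R) ∈ Submodule.span R {a, b} := h ▸ trivial
  have h1 : (![0, 1] : Fin 2 → R) ∈ Submodule.span R {a, b} := h ▸ trivial
  rw [Submodule.mem_span_pair] at h0 h1
  obtain ⟨c0, d0, h0⟩ := h0
  obtain ⟨c1, d1, h1⟩ := h1
  refine ⟨Matrix.of ![![c0, c1], ![d0, d1]], ?_⟩
  ext i j
  have h0' := congrFun h0 i
  have h1' := congrFun h1 i
  fin_cases i <;> fin_cases j <;>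
    simp_all [colMat, Matrix.mul_apply, Fin.sum_univ_two, mul_comm, Matrix.one_apply]

end Aux

/-- Let `p` be an odd prime, `k ≥ 0`, `V = (Z/p^{k+1})²`. The affine
group `GL_2(Z/p^{k+1}) ⋉ V` acts transitively on 4-tuples `(v₁,v₂,v₃,v₄) ∈ V⁴`
satisfying the product-one condition `v₁ − v₂ + v₃ − v₄ = 0` and the generation
condition that the differences `v_i − v_j` (`i < j`) span `V`. -/
theorem affine_transitive_on_nielsen_tuples (p : ℕ) (hp : p.Prime) (hodd : p ≠ 2) (k : ℕ)
    (v v' : Fin 4 → (Fin 2 → ZMod (p ^ (k + 1))))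
    (hsum : v 0 - v 1 + v 2 - v 3 = 0) (hsum' : v' 0 - v' 1 + v' 2 - v' 3 = 0)
    (hgen : Submodule.span (ZMod (p ^ (k + 1)))
      {x | ∃ i j : Fin 4, i < j ∧ x = v i - v j} = ⊤)
    (hgen' : Submodule.span (ZMod (p ^ (k + 1)))
      {x | ∃ i j : Fin 4, i < j ∧ x = v' i - v' j} = ⊤) :
    ∃ (β : Matrix.GeneralLinearGroup (Fin 2) (ZMod (p ^ (k + 1))))
      (w : Fin 2 → ZMod (p ^ (k + 1))),
      ∀ i : Fin 4, β.val.mulVec (v i) + w = v' i := by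
  -- reduce span of all differences to span of the two basic differences
  have key : ∀ u : Fin 4 → (Fin 2 → ZMod (p ^ (k + 1))), u 0 - u 1 + u 2 - u 3 = 0 →
      Submodule.span (ZMod (p ^ (k + 1))) {x | ∃ i j : Fin 4, i < j ∧ x = u i - u j} = ⊤ →
      Submodule.span (ZMod (p ^ (k + 1))) {u 1 - u 0, u 3 - u 0} = ⊤ := by
    intro u hs hg
    apply top_unique
    rw [← hg]
    apply Submodule.span_le.mpr
    rintro x ⟨i, j, hij, rfl⟩
    have ha : u 1 - u 0 ∈ Submodule.span (ZMod (p ^ (k + 1))) {u 1 - u 0, u 3 - u 0} :=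
      Submodule.subset_span (by simp)
    have hb : u 3 - u 0 ∈ Submodule.span (ZMod (p ^ (k + 1))) {u 1 - u 0, u 3 - u 0} :=
      Submodule.subset_span (by simp)
    fin_cases i <;> fin_cases j <;> first
      | exact absurd hij (by decide)
      | (show u 0 - u 1 ∈ _
         rw [show u 0 - u 1 = -(u 1 - u 0) from by ring]; exact neg_mem ha)
      | (show u 0 - u 2 ∈ _
         rw [show u 0 - u 2 = -((u 1 - u 0) + (u 3 - u 0)) from by linear_combination -hs]
         exact neg_mem (add_mem ha hb))
      | (show u 0 - u 3 ∈ _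
         rw [show u 0 - u 3 = -(u 3 - u 0) from by ring]; exact neg_mem hb)
      | (show u 1 - u 2 ∈ _
         rw [show u 1 - u 2 = -(u 3 - u 0) from by linear_combination -hs]; exact neg_mem hb)
      | (show u 1 - u 3 ∈ _
         rw [show u 1 - u 3 = (u 1 - u 0) - (u 3 - u 0) from by ring]; exact sub_mem ha hb)
      | (show u 2 - u 3 ∈ _
         rw [show u 2 - u 3 = u 1 - u 0 from by linear_combination hs]; exact ha)
  obtain ⟨N, hN⟩ := exists_rightInv (key v hsum hgen)
  obtain ⟨N', hN'⟩ := exists_rightInv (key v' hsum' hgen')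
  set a := v 1 - v 0 with ha_def
  set b := v 3 - v 0 with hb_def
  set a' := v' 1 - v' 0 with ha'_def
  set b' := v' 3 - v' 0 with hb'_def
  have hM : Invertible (colMat a b) := invertibleOfRightInverse _ _ hN
  have hM' : Invertible (colMat a' b') := invertibleOfRightInverse _ _ hN'
  set M := colMat a b
  set M' := colMat a' b'
  refine ⟨⟨M' * ⅟M, M * ⅟M', ?_, ?_⟩, v' 0 - (M' * ⅟M).mulVec (v 0), ?_⟩
  · rw [Matrix.mul_assoc, ← Matrix.mul_assoc (⅟M), invOf_mul_self, Matrix.one_mul,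
      mul_invOf_self]
  · rw [Matrix.mul_assoc, ← Matrix.mul_assoc (⅟M'), invOf_mul_self, Matrix.one_mul,
      mul_invOf_self]
  · intro i
    have hdiff : ∀ x : Fin 2 → ZMod (p ^ (k + 1)),
        (M' * ⅟M).mulVec (M.mulVec x) = M'.mulVec x := by
      intro x
      rw [Matrix.mulVec_mulVec, Matrix.mul_assoc, invOf_mul_self, Matrix.mul_one]
    have e0 : (M' * ⅟M).mulVec a = a' := by
      have h := colMat_mulVec_e0 a b
      rw [show (colMat a b : Matrix (Fin 2) (Fin 2) (ZMod (p ^ (k + 1)))) = M from rfl] at h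
      rw [← h, hdiff]; exact colMat_mulVec_e0 a' b'
    have e1 : (M' * ⅟M).mulVec b = b' := by
      have h := colMat_mulVec_e1 a b
      rw [show (colMat a b : Matrix (Fin 2) (Fin 2) (ZMod (p ^ (k + 1)))) = M from rfl] at h
      rw [← h, hdiff]; exact colMat_mulVec_e1 a' b'
    have key2 : ∀ j : Fin 4, (M' * ⅟M).mulVec (v j - v 0) = v' j - v' 0 →
        (M' * ⅟M).mulVec (v j) + (v' 0 - (M' * ⅟M).mulVec (v 0)) = v' j := by
      intro j hj
      have := Matrix.mulVec_sub (M' * ⅟M) (v j) (v 0)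
      rw [hj] at this
      linear_combination -this
    fin_cases i
    · show (M' * ⅟M).mulVec (v 0) + (v' 0 - (M' * ⅟M).mulVec (v 0)) = v' 0
      ring
    · exact key2 1 (by rw [show v 1 - v 0 = a from rfl, e0])
    · refine key2 2 ?_
      have h2 : v 2 - v 0 = a + b := by rw [ha_def, hb_def]; linear_combination hsum
      have h2' : v' 2 - v' 0 = a' + b' := by rw [ha'_def, hb'_def]; linear_combination hsum'
      rw [h2, Matrix.mulVec_add, e0, e1, h2']
    · exact key2 3 (by rw [show v 3 - v 0 = b from rfl, e1])
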